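/- Fix p : ℤ and assume the Laplacian Δ is surjective in degrees p−1 and p−2 (i.e. Δ (p−1) and Δ (p−2) are surjective). Suppose W is a subspace of V p with W ⊆ ker (d p) ∩ ker (δ p) and with ker (d p) = W ⊕ range (d (p−1)) as an internal direct sum. Then the p-th cohomology of the subcomplex of harmonic elements with differential d, namely the quotient (ker (d p) ∩ ker (Δ p)) / (image under d (p−1) of ker (Δ (p−1))), is linearly isomorphic to the product W × (ker (d (p−1)) / range (d (p−2))). (This is the abstract form of Theorem 1: the harmonic cohomology in degree p is the de Rham cohomology in degree p plus an echo of the de Rham cohomology in degree p−1.) -/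

import Mathlib

/-- Transport along an equality of indices, as a linear map (the identity map). -/
def lcast (V : ℤ → Type*) [∀ p, AddCommGroup (V p)] [∀ p, Module ℝ (V p)]
    {p q : ℤ} (h : p = q) : V p →ₗ[ℝ] V q := by
  subst h; exact LinearMap.id

/-- The differential `d (p-1)`, regarded as a linear map into `V p`. -/
def dTo (V : ℤ → Type*) [∀ p, AddCommGroup (V p)] [∀ p, Module ℝ (V p)]
    (d : ∀ p : ℤ, V p →ₗ[ℝ] V (p + 1)) (p : ℤ) : V (p - 1) →ₗ[ℝ] V p :=
  (lcast V (by omega)).comp (d (p - 1))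

/-- The codifferential `δ (p+1)`, regarded as a linear map into `V p`. -/
def deltaTo (V : ℤ → Type*) [∀ p, AddCommGroup (V p)] [∀ p, Module ℝ (V p)]
    (δ : ∀ p : ℤ, V p →ₗ[ℝ] V (p - 1)) (p : ℤ) : V (p + 1) →ₗ[ℝ] V p :=
  (lcast V (by omega)).comp (δ (p + 1))

/-- The Laplacian `Δ p = d (p-1) ∘ δ p + δ (p+1) ∘ d p : V p →ₗ[ℝ] V p`. -/
def Lap (V : ℤ → Type*) [∀ p, AddCommGroup (V p)] [∀ p, Module ℝ (V p)]
    (d : ∀ p : ℤ, V p →ₗ[ℝ] V (p + 1)) (δ : ∀ p : ℤ, V p →ₗ[ℝ] V (p - 1))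
    (p : ℤ) : V p →ₗ[ℝ] V p :=
  ((dTo V d p).comp (δ p)) + ((deltaTo V δ p).comp (d p))

section helpers
variable (V : ℤ → Type*) [∀ p, AddCommGroup (V p)] [∀ p, Module ℝ (V p)]

lemma lcast_eq_zero {p q : ℤ} (h : p = q) (x : V p) :
    lcast V h x = 0 ↔ x = 0 := by subst h; exact Iff.rfl

variable (d : ∀ p : ℤ, V p →ₗ[ℝ] V (p + 1)) (δ : ∀ p : ℤ, V p →ₗ[ℝ] V (p - 1))

lemma d_lcast {q q' : ℤ} (h : q' = q) (v : V q') :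
    d q (lcast V h v) = lcast V (by rw [h]) (d q' v) := by subst h; rfl

lemma delta_lcast {q q' : ℤ} (h : q' = q) (v : V q') :
    δ q (lcast V h v) = lcast V (by rw [h]) (δ q' v) := by subst h; rfl

lemma lap_apply (q : ℤ) (x : V q) :
    Lap V d δ q x = dTo V d q (δ q x) + deltaTo V δ q (d q x) := rfl

lemma d_d (hd : ∀ p : ℤ, (d (p + 1)).comp (d p) = 0) (q : ℤ) (v : V q) :
    d (q + 1) (d q v) = 0 := by
  have := LinearMap.ext_iff.mp (hd q) v
  simpa using this

lemma d_dTo (hd : ∀ p : ℤ, (d (p + 1)).comp (d p) = 0) (q : ℤ) (y : V (q - 1)) :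
    d q (dTo V d q y) = 0 := by
  rw [dTo, LinearMap.comp_apply, d_lcast, d_d V d hd, map_zero]

lemma dTo_dTo (hd : ∀ p : ℤ, (d (p + 1)).comp (d p) = 0) (q : ℤ) (u : V (q - 1 - 1)) :
    dTo V d q (dTo V d (q - 1) u) = 0 := by
  rw [dTo, LinearMap.comp_apply, d_dTo V d hd, map_zero]

lemma delta_dTo (q : ℤ) (y : V (q - 1)) :
    δ q (dTo V d q y) = deltaTo V δ (q - 1) (d (q - 1) y) := by
  rw [dTo, LinearMap.comp_apply, delta_lcast]; rfl

lemma delta_dTo' (q : ℤ) (y : V (q - 1)) :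
    δ q (dTo V d q y) = Lap V d δ (q - 1) y - dTo V d (q - 1) (δ (q - 1) y) := by
  rw [delta_dTo, lap_apply]; abel

lemma lap_surj_congr {q q' : ℤ} (h : q = q') (hs : Function.Surjective (Lap V d δ q)) :
    Function.Surjective (Lap V d δ q') := by subst h; exact hs

end helpers

/-- **Theorem 1 (abstract form).**  If the Laplacian is surjective in degrees `p-1` and
`p-2`, and `W ⊆ ker (d p) ∩ ker (δ p)` is a subspace with `ker (d p) = W ⊕ range (d (p-1))`,
then the `p`-th cohomology of the complex of harmonic elements with differential `d`,
`(ker (d p) ∩ ker (Δ p)) / d (p-1) (ker (Δ (p-1)))`, is linearly isomorphic to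
`W × (ker (d (p-1)) / range (d (p-2)))`. -/
theorem harmonic_cohomology_iso
    (V : ℤ → Type*) [∀ p, AddCommGroup (V p)] [∀ p, Module ℝ (V p)]
    (d : ∀ p : ℤ, V p →ₗ[ℝ] V (p + 1)) (δ : ∀ p : ℤ, V p →ₗ[ℝ] V (p - 1))
    (hd : ∀ p : ℤ, (d (p + 1)).comp (d p) = 0)
    (hδ : ∀ p : ℤ, (δ (p - 1)).comp (δ p) = 0)
    (p : ℤ)
    (hΔ1 : Function.Surjective (Lap V d δ (p - 1)))
    (hΔ2 : Function.Surjective (Lap V d δ (p - 2)))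
    (W : Submodule ℝ (V p))
    (hW : W ≤ LinearMap.ker (d p) ⊓ LinearMap.ker (δ p))
    (hWdisj : W ⊓ LinearMap.range (dTo V d p) = ⊥)
    (hWspan : W ⊔ LinearMap.range (dTo V d p) = LinearMap.ker (d p)) :
    Nonempty (
      ((↥(LinearMap.ker (d p) ⊓ LinearMap.ker (Lap V d δ p)) ⧸
          (Submodule.comap
            (LinearMap.ker (d p) ⊓ LinearMap.ker (Lap V d δ p)).subtype
            (Submodule.map (dTo V d p) (LinearMap.ker (Lap V d δ (p - 1))))))
        ≃ₗ[ℝ]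
      (W × (↥(LinearMap.ker (d (p - 1))) ⧸
          (Submodule.comap (LinearMap.ker (d (p - 1))).subtype
            (LinearMap.range (dTo V d (p - 1)))))))) := by
  classical
  set K : Submodule ℝ (V p) := LinearMap.ker (d p) with hKdef
  set R : Submodule ℝ (V p) := LinearMap.range (dTo V d p) with hRdef
  set K1 : Submodule ℝ (V (p - 1)) := LinearMap.ker (d (p - 1)) with hK1def
  set Dom : Submodule ℝ (V p) := K ⊓ LinearMap.ker (Lap V d δ p) with hDomdef
  set Q1 : Submodule ℝ ↥K1 :=
    Submodule.comap K1.subtype (LinearMap.range (dTo V d (p - 1))) with hQ1def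
  set S : Submodule ℝ ↥Dom :=
    Submodule.comap Dom.subtype
      (Submodule.map (dTo V d p) (LinearMap.ker (Lap V d δ (p - 1)))) with hSdef
  -- basic inclusions
  have hRK : R ≤ K := by
    rintro x ⟨y, rfl⟩
    exact LinearMap.mem_ker.mpr (d_dTo V d hd p y)
  have hWK : W ≤ K := fun x hx => (hW hx).1
  -- complementary submodules inside K
  set W' : Submodule ℝ ↥K := Submodule.comap K.subtype W with hW'def
  set R' : Submodule ℝ ↥K := Submodule.comap K.subtype R with hR'def
  have hcompl : IsCompl W' R' := by
    constructor
    · rw [disjoint_iff]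
      have : W' ⊓ R' = Submodule.comap K.subtype (W ⊓ R) := by
        rw [Submodule.comap_inf]
      rw [this, hWdisj, Submodule.comap_bot, Submodule.ker_subtype]
    · rw [codisjoint_iff, eq_top_iff]
      rintro ⟨x, hx⟩ -
      have hx' : x ∈ W ⊔ R := hWspan.symm ▸ hx
      obtain ⟨w, hw, r, hr, hsum⟩ := Submodule.mem_sup.mp hx'
      exact Submodule.mem_sup.mpr
        ⟨⟨w, hWK hw⟩, hw, ⟨r, hRK hr⟩, hr, Subtype.ext hsum⟩
  set projW := Submodule.linearProjOfIsCompl W' R' hcompl with hprojWdef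
  set eW : ↥W' ≃ₗ[ℝ] ↥W := Submodule.comapSubtypeEquivOfLe hWK with heWdef
  set ι : ↥Dom →ₗ[ℝ] ↥K := Submodule.inclusion inf_le_left with hιdef
  set Φ₁ : ↥Dom →ₗ[ℝ] ↥W := eW.toLinearMap.comp (projW.comp ι) with hΦ₁def
  -- the second component
  have hmemK1 : ∀ x : ↥Dom, δ p (Dom.subtype x) ∈ K1 := by
    rintro ⟨x, hx1, hx2⟩
    have hx2' : Lap V d δ p x = 0 := hx2
    rw [lap_apply, LinearMap.mem_ker.mp hx1, map_zero, add_zero, dTo,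
      LinearMap.comp_apply, lcast_eq_zero] at hx2'
    exact LinearMap.mem_ker.mpr hx2'
  set ψ : ↥Dom →ₗ[ℝ] ↥K1 :=
    LinearMap.codRestrict K1 ((δ p).comp Dom.subtype) hmemK1 with hψdef
  set Φ₂ : ↥Dom →ₗ[ℝ] (↥K1 ⧸ Q1) := Q1.mkQ.comp ψ with hΦ₂def
  set Φ : ↥Dom →ₗ[ℝ] (↥W × (↥K1 ⧸ Q1)) := Φ₁.prod Φ₂ with hΦdef
  -- surjectivity of Φ
  have hsurj : Function.Surjective Φ := by
    rintro ⟨w, c⟩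
    obtain ⟨z, rfl⟩ := Submodule.mkQ_surjective Q1 c
    obtain ⟨y, hy⟩ := hΔ1 z.val
    have hdw : d p w.val = 0 := LinearMap.mem_ker.mp (hW w.2).1
    have hδw : δ p w.val = 0 := LinearMap.mem_ker.mp (hW w.2).2
    have hdToz : dTo V d p z.val = 0 := by
      rw [dTo, LinearMap.comp_apply, LinearMap.mem_ker.mp z.2, map_zero]
    have hxK : w.val + dTo V d p y ∈ K := by
      rw [hKdef, LinearMap.mem_ker, map_add, hdw, d_dTo V d hd, add_zero]
    have hδx : δ p (w.val + dTo V d p y)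
        = z.val - dTo V d (p - 1) (δ (p - 1) y) := by
      rw [map_add, hδw, zero_add, delta_dTo' V d δ, hy]
    have hxH : w.val + dTo V d p y ∈ LinearMap.ker (Lap V d δ p) := by
      rw [LinearMap.mem_ker, lap_apply, LinearMap.mem_ker.mp hxK, map_zero,
        add_zero, hδx, map_sub, hdToz, dTo_dTo V d hd, sub_zero]
    refine ⟨⟨w.val + dTo V d p y, hxK, hxH⟩, ?_⟩
    have hfst : Φ₁ ⟨w.val + dTo V d p y, hxK, hxH⟩ = w := by
      have hι : ι ⟨w.val + dTo V d p y, hxK, hxH⟩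
          = (⟨w.val, hWK w.2⟩ : ↥K) + ⟨dTo V d p y, hRK ⟨y, rfl⟩⟩ :=
        Subtype.ext rfl
      have h1 : projW ((⟨w.val, hWK w.2⟩ : ↥K)) = ⟨⟨w.val, hWK w.2⟩, w.2⟩ :=
        Submodule.linearProjOfIsCompl_apply_left hcompl ⟨⟨w.val, hWK w.2⟩, w.2⟩
      have h2 : projW ((⟨dTo V d p y, hRK ⟨y, rfl⟩⟩ : ↥K)) = 0 :=
        Submodule.projectionOnto_apply_of_mem_right hcompl ⟨y, rfl⟩
      rw [hΦ₁def, LinearMap.comp_apply, LinearMap.comp_apply, hι, map_add,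
        h1, h2, add_zero]
      exact Subtype.ext rfl
    have hsnd : Φ₂ ⟨w.val + dTo V d p y, hxK, hxH⟩ = Q1.mkQ z := by
      rw [hΦ₂def, LinearMap.comp_apply]
      rw [Submodule.mkQ_apply, Submodule.mkQ_apply, Submodule.Quotient.eq]
      have hψx : (ψ ⟨w.val + dTo V d p y, hxK, hxH⟩ : V (p - 1))
          = z.val - dTo V d (p - 1) (δ (p - 1) y) := hδx
      have hmem : (dTo V d (p - 1) (δ (p - 1) y)) ∈ K1 := by
        rw [hK1def, LinearMap.mem_ker]
        exact d_dTo V d hd (p - 1) _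
      have : ψ ⟨w.val + dTo V d p y, hxK, hxH⟩ - z
          = -(⟨dTo V d (p - 1) (δ (p - 1) y), hmem⟩ : ↥K1) := by
        apply Subtype.ext
        simp [hψx]
      rw [this]
      exact neg_mem ⟨δ (p - 1) y, rfl⟩
    exact Prod.ext hfst hsnd
  -- the kernel of Φ
  have hker : LinearMap.ker Φ = S := by
    ext x
    rw [LinearMap.mem_ker, hSdef, Submodule.mem_comap, Submodule.mem_map]
    constructor
    · intro hx0
      have h1 : Φ₁ x = 0 := congrArg Prod.fst hx0
      have h2 : Φ₂ x = 0 := congrArg Prod.snd hx0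
      -- from h1 : Φ₁ x = 0, get x ∈ R
      have hproj : projW (ι x) = 0 := by
        rw [hΦ₁def] at h1
        simp only [LinearMap.comp_apply, LinearEquiv.coe_coe] at h1
        exact eW.map_eq_zero_iff.mp h1
      have hxR : (x : V p) ∈ R :=
        (Submodule.linearProjOfIsCompl_apply_eq_zero_iff hcompl).mp hproj
      obtain ⟨y, hy⟩ := hxR
      -- from h2 : Φ₂ x = 0, get δ p x ∈ range (dTo (p-1))
      have hδxR : δ p (x : V p) ∈ LinearMap.range (dTo V d (p - 1)) := by
        rw [hΦ₂def, LinearMap.comp_apply, Submodule.mkQ_apply,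
          Submodule.Quotient.mk_eq_zero] at h2
        exact h2
      obtain ⟨u, hu⟩ := hδxR
      -- δ p x = deltaTo (p-1) (d (p-1) y)
      have hdel : deltaTo V δ (p - 1) (d (p - 1) y)
          = dTo V d (p - 1) u := by
        rw [← delta_dTo V d δ p y, hy, hu]
      -- pick v with Lap (p-1-1) v = δ (p-1) y + u
      have hΔ2' : Function.Surjective (Lap V d δ (p - 1 - 1)) :=
        lap_surj_congr V d δ (by omega) hΔ2
      obtain ⟨v, hv⟩ := hΔ2' (δ (p - 1) y + u)
      refine ⟨y - dTo V d (p - 1) v, ?_, ?_⟩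
      · -- y - dTo v is harmonic
        rw [LinearMap.mem_ker, lap_apply]
        have e1 : d (p - 1) (y - dTo V d (p - 1) v) = d (p - 1) y := by
          rw [map_sub, d_dTo V d hd, sub_zero]
        have e2 : δ (p - 1) (y - dTo V d (p - 1) v)
            = dTo V d (p - 1 - 1) (δ (p - 1 - 1) v) - u := by
          rw [map_sub, delta_dTo' V d δ, hv]; abel
        rw [e1, e2, map_sub, dTo_dTo V d hd, hdel, zero_sub]
        abel
      · have e3 : dTo V d p (y - dTo V d (p - 1) v) = dTo V d p y := by
          rw [map_sub, dTo_dTo V d hd, sub_zero]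
        rw [e3, hy]; rfl
    · rintro ⟨y, hyH, hyx⟩
      have hproj : projW (ι x) = 0 := by
        apply Submodule.linearProjOfIsCompl_apply_right' hcompl
        exact ⟨y, hyx⟩
      have h1 : Φ₁ x = 0 := by
        rw [hΦ₁def]
        simp only [LinearMap.comp_apply, LinearEquiv.coe_coe, hproj, map_zero]
      have h2 : Φ₂ x = 0 := by
        rw [hΦ₂def, LinearMap.comp_apply, Submodule.mkQ_apply,
          Submodule.Quotient.mk_eq_zero]
        show δ p ((x : V p)) ∈ LinearMap.range (dTo V d (p - 1))
        have : (x : V p) = dTo V d p y := hyx.symm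
        rw [this, delta_dTo' V d δ, LinearMap.mem_ker.mp hyH, zero_sub]
        exact neg_mem ⟨δ (p - 1) y, rfl⟩
      exact Prod.ext h1 h2
  -- conclude
  exact ⟨(Submodule.quotEquivOfEq S (LinearMap.ker Φ) hker.symm).trans
    (Φ.quotKerEquivOfSurjective hsurj)⟩
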